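/- Let u : ℝ² → ℝ be C² and q a nondegenerate critical point of u (i.e. ∇u(q) = 0 and det Hess u(q) ≠ 0). Then q is an isolated zero of the vector field T(p) = (u_yy·u_x - u_xy·u_y, u_xx·u_y - u_xy·u_x)(p), and the local Brouwer degree (index) of T at q equals 1. -/

import Mathlib

open Real

/-- Partial derivative in the first (x) variable. -/
noncomputable def px (u : ℝ → ℝ → ℝ) : ℝ → ℝ → ℝ := fun x y => deriv (fun t => u t y) x

/-- Partial derivative in the second (y) variable. -/
noncomputable def py (u : ℝ → ℝ → ℝ) : ℝ → ℝ → ℝ := fun x y => deriv (fun t => u x t) y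


private lemma pd1 (f : ℝ × ℝ → ℝ) {x y : ℝ} (hf : DifferentiableAt ℝ f (x, y)) :
    HasDerivAt (fun t => f (t, y)) (fderiv ℝ f (x, y) (1, 0)) x := by
  have h := hf.hasFDerivAt.comp_hasDerivAt x (HasDerivAt.prodMk (hasDerivAt_id x) (hasDerivAt_const x y))
  exact h

private lemma pd2 (f : ℝ × ℝ → ℝ) {x y : ℝ} (hf : DifferentiableAt ℝ f (x, y)) :
    HasDerivAt (fun t => f (x, t)) (fderiv ℝ f (x, y) (0, 1)) y := by
  have h := hf.hasFDerivAt.comp_hasDerivAt y (HasDerivAt.prodMk (hasDerivAt_const y x) (hasDerivAt_id y))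
  exact h

private lemma pdGder (f : ℝ × ℝ → ℝ) (hf : ContDiff ℝ 2 (fderiv ℝ f)) (p : ℝ × ℝ) (v w : ℝ × ℝ) :
    fderiv ℝ (fun p => fderiv ℝ f p w) p v = fderiv ℝ (fderiv ℝ f) p v w := by
  have hB : HasFDerivAt (fderiv ℝ f) (fderiv ℝ (fderiv ℝ f) p) p :=
    ((hf.differentiable two_ne_zero) p).hasFDerivAt
  have h := (ContinuousLinearMap.apply ℝ ℝ w).hasFDerivAt.comp p hB
  have h2 : fderiv ℝ (fun p => fderiv ℝ f p w) p
      = (ContinuousLinearMap.apply ℝ ℝ w).comp (fderiv ℝ (fderiv ℝ f) p) := h.fderiv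
  rw [h2]; rfl

/-- At a nondegenerate critical point q of u, q is an isolated zero of the vector field T and
the index of T at q is 1: since the zero is regular, the index equals the sign of the Jacobian
determinant of T at q, which equals (det Hess u(q))² > 0. -/
theorem stmt4 (u : ℝ → ℝ → ℝ)
    (hu : ContDiff ℝ 3 (fun p : ℝ × ℝ => u p.1 p.2))
    (T1 T2 : ℝ → ℝ → ℝ)
    (hT1 : T1 = fun x y => py (py u) x y * px u x y - py (px u) x y * py u x y)
    (hT2 : T2 = fun x y => px (px u) x y * py u x y - py (px u) x y * px u x y)
    (q : ℝ × ℝ)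
    (hcrit : px u q.1 q.2 = 0 ∧ py u q.1 q.2 = 0)
    (hnd : px (px u) q.1 q.2 * py (py u) q.1 q.2 - py (px u) q.1 q.2 ^ 2 ≠ 0) :
    (∃ ε > (0:ℝ), ∀ p : ℝ × ℝ, dist p q < ε → T1 p.1 p.2 = 0 → T2 p.1 p.2 = 0 → p = q) ∧
    px T1 q.1 q.2 * py T2 q.1 q.2 - py T1 q.1 q.2 * px T2 q.1 q.2 =
      (px (px u) q.1 q.2 * py (py u) q.1 q.2 - py (px u) q.1 q.2 ^ 2) ^ 2 ∧
    0 < px T1 q.1 q.2 * py T2 q.1 q.2 - py T1 q.1 q.2 * px T2 q.1 q.2 := by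
  obtain ⟨hx0, hy0⟩ := hcrit
  set F : ℝ × ℝ → ℝ := fun p => u p.1 p.2 with hF
  have hFd : Differentiable ℝ F := hu.differentiable (by norm_num)
  have hdF : ContDiff ℝ 2 (fderiv ℝ F) := hu.fderiv_right (by norm_num)
  set G1 : ℝ × ℝ → ℝ := fun p => fderiv ℝ F p (1, 0) with hG1def
  set G2 : ℝ × ℝ → ℝ := fun p => fderiv ℝ F p (0, 1) with hG2def
  have hG1c : ContDiff ℝ 2 G1 := hdF.clm_apply contDiff_const
  have hG2c : ContDiff ℝ 2 G2 := hdF.clm_apply contDiff_const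
  set H11 : ℝ × ℝ → ℝ := fun p => fderiv ℝ G1 p (1, 0) with hH11def
  set H12 : ℝ × ℝ → ℝ := fun p => fderiv ℝ G1 p (0, 1) with hH12def
  set H21 : ℝ × ℝ → ℝ := fun p => fderiv ℝ G2 p (1, 0) with hH21def
  set H22 : ℝ × ℝ → ℝ := fun p => fderiv ℝ G2 p (0, 1) with hH22def
  have hG1d : ContDiff ℝ 1 (fderiv ℝ G1) := hG1c.fderiv_right (by norm_num)
  have hG2d : ContDiff ℝ 1 (fderiv ℝ G2) := hG2c.fderiv_right (by norm_num)
  have hH11c : ContDiff ℝ 1 H11 := hG1d.clm_apply contDiff_const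
  have hH12c : ContDiff ℝ 1 H12 := hG1d.clm_apply contDiff_const
  have hH21c : ContDiff ℝ 1 H21 := hG2d.clm_apply contDiff_const
  have hH22c : ContDiff ℝ 1 H22 := hG2d.clm_apply contDiff_const
  -- identify first partials
  have e1 : px u = fun x y => G1 (x, y) :=
    funext fun x => funext fun y => (pd1 F (hFd (x, y))).deriv
  have e2 : py u = fun x y => G2 (x, y) :=
    funext fun x => funext fun y => (pd2 F (hFd (x, y))).deriv
  -- identify second partials
  have e11 : px (px u) = fun x y => H11 (x, y) := by
    funext x y
    show deriv (fun t => px u t y) x = H11 (x, y)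
    simp only [e1]
    exact (pd1 G1 ((hG1c.differentiable two_ne_zero) (x, y))).deriv
  have e12 : py (px u) = fun x y => H12 (x, y) := by
    funext x y
    show deriv (fun t => px u x t) y = H12 (x, y)
    simp only [e1]
    exact (pd2 G1 ((hG1c.differentiable two_ne_zero) (x, y))).deriv
  have e21 : px (py u) = fun x y => H21 (x, y) := by
    funext x y
    show deriv (fun t => py u t y) x = H21 (x, y)
    simp only [e2]
    exact (pd1 G2 ((hG2c.differentiable two_ne_zero) (x, y))).deriv
  have e22 : py (py u) = fun x y => H22 (x, y) := by
    funext x y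
    show deriv (fun t => py u x t) y = H22 (x, y)
    simp only [e2]
    exact (pd2 G2 ((hG2c.differentiable two_ne_zero) (x, y))).deriv
  -- symmetry of second derivatives
  have hsym := second_derivative_symmetric (f' := fderiv ℝ F)
    (fun y => (hFd y).hasFDerivAt)
    ((hdF.differentiable two_ne_zero q).hasFDerivAt) ((1:ℝ), (0:ℝ)) ((0:ℝ), (1:ℝ))
  have hsymq : H21 q = H12 q := by
    rw [hH21def, hH12def]
    show fderiv ℝ (fun p => fderiv ℝ F p (0,1)) q (1,0)
        = fderiv ℝ (fun p => fderiv ℝ F p (1,0)) q (0,1)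
    rw [pdGder F hdF q, pdGder F hdF q]
    exact hsym
  have hG10 : G1 q = 0 := by rw [e1] at hx0; simpa using hx0
  have hG20 : G2 q = 0 := by rw [e2] at hy0; simpa using hy0
  -- values of the four partials of T1, T2 at q
  have hd1 : HasDerivAt (fun t => H22 (t, q.2)) (fderiv ℝ H22 (q.1, q.2) (1,0)) q.1 :=
    pd1 H22 ((hH22c.differentiable one_ne_zero) _)
  have hd2 : HasDerivAt (fun t => H22 (q.1, t)) (fderiv ℝ H22 (q.1, q.2) (0,1)) q.2 :=
    pd2 H22 ((hH22c.differentiable one_ne_zero) _)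
  have hd3 : HasDerivAt (fun t => H12 (t, q.2)) (fderiv ℝ H12 (q.1, q.2) (1,0)) q.1 :=
    pd1 H12 ((hH12c.differentiable one_ne_zero) _)
  have hd4 : HasDerivAt (fun t => H12 (q.1, t)) (fderiv ℝ H12 (q.1, q.2) (0,1)) q.2 :=
    pd2 H12 ((hH12c.differentiable one_ne_zero) _)
  have hd5 : HasDerivAt (fun t => H11 (t, q.2)) (fderiv ℝ H11 (q.1, q.2) (1,0)) q.1 :=
    pd1 H11 ((hH11c.differentiable one_ne_zero) _)
  have hd6 : HasDerivAt (fun t => H11 (q.1, t)) (fderiv ℝ H11 (q.1, q.2) (0,1)) q.2 :=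
    pd2 H11 ((hH11c.differentiable one_ne_zero) _)
  have hg1x : HasDerivAt (fun t => G1 (t, q.2)) (H11 (q.1, q.2)) q.1 :=
    pd1 G1 ((hG1c.differentiable two_ne_zero) _)
  have hg1y : HasDerivAt (fun t => G1 (q.1, t)) (H12 (q.1, q.2)) q.2 :=
    pd2 G1 ((hG1c.differentiable two_ne_zero) _)
  have hg2x : HasDerivAt (fun t => G2 (t, q.2)) (H21 (q.1, q.2)) q.1 :=
    pd1 G2 ((hG2c.differentiable two_ne_zero) _)
  have hg2y : HasDerivAt (fun t => G2 (q.1, t)) (H22 (q.1, q.2)) q.2 :=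
    pd2 G2 ((hG2c.differentiable two_ne_zero) _)
  have hqe : ((q.1, q.2) : ℝ × ℝ) = q := Prod.mk.eta
  have hT1fx : (fun t => T1 t q.2) = fun t => H22 (t, q.2) * G1 (t, q.2) - H12 (t, q.2) * G2 (t, q.2) := by
    funext t; simp only [hT1]; rw [e22, e12, e1, e2]
  have hT1fy : (fun t => T1 q.1 t) = fun t => H22 (q.1, t) * G1 (q.1, t) - H12 (q.1, t) * G2 (q.1, t) := by
    funext t; simp only [hT1]; rw [e22, e12, e1, e2]
  have hT2fx : (fun t => T2 t q.2) = fun t => H11 (t, q.2) * G2 (t, q.2) - H12 (t, q.2) * G1 (t, q.2) := by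
    funext t; simp only [hT2]; rw [e11, e12, e1, e2]
  have hT2fy : (fun t => T2 q.1 t) = fun t => H11 (q.1, t) * G2 (q.1, t) - H12 (q.1, t) * G1 (q.1, t) := by
    funext t; simp only [hT2]; rw [e11, e12, e1, e2]
  have hpxT1 : px T1 q.1 q.2 = H22 q * H11 q - H12 q * H21 q := by
    show deriv (fun t => T1 t q.2) q.1 = _
    rw [hT1fx, ((hd1.fun_mul hg1x).fun_sub (hd3.fun_mul hg2x)).deriv, hqe, hG10, hG20]
    ring
  have hpyT1 : py T1 q.1 q.2 = H22 q * H12 q - H12 q * H22 q := by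
    show deriv (fun t => T1 q.1 t) q.2 = _
    rw [hT1fy, ((hd2.fun_mul hg1y).fun_sub (hd4.fun_mul hg2y)).deriv, hqe, hG10, hG20]
    ring
  have hpxT2 : px T2 q.1 q.2 = H11 q * H21 q - H12 q * H11 q := by
    show deriv (fun t => T2 t q.2) q.1 = _
    rw [hT2fx, ((hd5.fun_mul hg2x).fun_sub (hd3.fun_mul hg1x)).deriv, hqe, hG10, hG20]
    ring
  have hpyT2 : py T2 q.1 q.2 = H11 q * H22 q - H12 q * H12 q := by
    show deriv (fun t => T2 q.1 t) q.2 = _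
    rw [hT2fy, ((hd6.fun_mul hg2y).fun_sub (hd4.fun_mul hg1y)).deriv, hqe, hG10, hG20]
    ring
  have ha : px (px u) q.1 q.2 = H11 q := by rw [e11]
  have hb : py (px u) q.1 q.2 = H12 q := by rw [e12]
  have hc : py (py u) q.1 q.2 = H22 q := by rw [e22]
  have hD : H11 q * H22 q - H12 q * H12 q ≠ 0 := by
    rw [ha, hb, hc] at hnd; intro h; apply hnd; rw [← h]; ring
  refine ⟨?_, ?_, ?_⟩
  · -- isolated zero via inverse function theorem
    have hG1c1 : ContDiff ℝ 1 G1 := hG1c.of_le one_le_two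
    have hG2c1 : ContDiff ℝ 1 G2 := hG2c.of_le one_le_two
    set Tm : ℝ × ℝ → ℝ × ℝ := fun p => (T1 p.1 p.2, T2 p.1 p.2) with hTm
    have hTmEq : Tm = fun p => (H22 p * G1 p - H12 p * G2 p, H11 p * G2 p - H12 p * G1 p) := by
      funext p
      show (T1 p.1 p.2, T2 p.1 p.2) = _
      have h1 : T1 p.1 p.2 = H22 p * G1 p - H12 p * G2 p := by
        simp only [hT1]; rw [e22, e12, e1, e2]
      have h2 : T2 p.1 p.2 = H11 p * G2 p - H12 p * G1 p := by
        simp only [hT2]; rw [e11, e12, e1, e2]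
      rw [h1, h2]
    have hTmC : ContDiff ℝ 1 Tm := by
      rw [hTmEq]
      exact ((hH22c.mul hG1c1).sub (hH12c.mul hG2c1)).prodMk
            ((hH11c.mul hG2c1).sub (hH12c.mul hG1c1))
    set D : ℝ := H11 q * H22 q - H12 q * H12 q with hDdef
    set L : (ℝ × ℝ) →L[ℝ] (ℝ × ℝ) := D • ContinuousLinearMap.id ℝ (ℝ × ℝ) with hLdef
    have hG1dq : HasFDerivAt G1 (fderiv ℝ G1 q) q := ((hG1c.differentiable two_ne_zero) q).hasFDerivAt
    have hG2dq : HasFDerivAt G2 (fderiv ℝ G2 q) q := ((hG2c.differentiable two_ne_zero) q).hasFDerivAt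
    have hH11dq : HasFDerivAt H11 (fderiv ℝ H11 q) q := ((hH11c.differentiable one_ne_zero) q).hasFDerivAt
    have hH12dq : HasFDerivAt H12 (fderiv ℝ H12 q) q := ((hH12c.differentiable one_ne_zero) q).hasFDerivAt
    have hH22dq : HasFDerivAt H22 (fderiv ℝ H22 q) q := ((hH22c.differentiable one_ne_zero) q).hasFDerivAt
    have hc1 : HasFDerivAt (fun p => H22 p * G1 p - H12 p * G2 p)
        ((H22 q • fderiv ℝ G1 q + G1 q • fderiv ℝ H22 q)
          - (H12 q • fderiv ℝ G2 q + G2 q • fderiv ℝ H12 q)) q :=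
      (hH22dq.mul hG1dq).sub (hH12dq.mul hG2dq)
    have hc2 : HasFDerivAt (fun p => H11 p * G2 p - H12 p * G1 p)
        ((H11 q • fderiv ℝ G2 q + G2 q • fderiv ℝ H11 q)
          - (H12 q • fderiv ℝ G1 q + G1 q • fderiv ℝ H12 q)) q :=
      (hH11dq.mul hG2dq).sub (hH12dq.mul hG1dq)
    have hlin : ∀ (G : ℝ × ℝ → ℝ) (v : ℝ × ℝ),
        fderiv ℝ G q v = v.1 * fderiv ℝ G q (1, 0) + v.2 * fderiv ℝ G q (0, 1) := by
      intro G v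
      have hv : v = v.1 • ((1:ℝ), (0:ℝ)) + v.2 • ((0:ℝ), (1:ℝ)) := by
        ext <;> simp
      conv_lhs => rw [hv]
      rw [map_add, map_smul, map_smul]
      simp [smul_eq_mul]
    have l1 : ∀ v : ℝ × ℝ, fderiv ℝ G1 q v = v.1 * H11 q + v.2 * H12 q := fun v => hlin G1 v
    have l2 : ∀ v : ℝ × ℝ, fderiv ℝ G2 q v = v.1 * H21 q + v.2 * H22 q := fun v => hlin G2 v
    have hL' : fderiv ℝ Tm q = L := by
      rw [hTmEq, (hc1.prodMk hc2).fderiv]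
      refine ContinuousLinearMap.ext fun v => ?_
      rw [Prod.ext_iff]
      constructor
      · simp only [ContinuousLinearMap.prod_apply, ContinuousLinearMap.sub_apply,
          ContinuousLinearMap.add_apply, ContinuousLinearMap.smul_apply,
          ContinuousLinearMap.id_apply, smul_eq_mul, hG10, hG20, hLdef, l1, l2, hsymq,
          Prod.smul_fst, Prod.smul_snd]
        rw [hDdef]; ring
      · simp only [ContinuousLinearMap.prod_apply, ContinuousLinearMap.sub_apply,
          ContinuousLinearMap.add_apply, ContinuousLinearMap.smul_apply,
          ContinuousLinearMap.id_apply, smul_eq_mul, hG10, hG20, hLdef, l1, l2, hsymq,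
          Prod.smul_fst, Prod.smul_snd]
        rw [hDdef]; ring
    have hstrict : HasStrictFDerivAt Tm L q := by
      have h := (hTmC.contDiffAt (x := q)).hasStrictFDerivAt one_ne_zero
      rwa [hL'] at h
    have hDne : D ≠ 0 := hD
    set eL : (ℝ × ℝ) ≃L[ℝ] (ℝ × ℝ) := ContinuousLinearEquiv.equivOfInverse L
      (D⁻¹ • ContinuousLinearMap.id ℝ (ℝ × ℝ))
      (fun x => by simp [hLdef, smul_smul, inv_mul_cancel₀ hDne, mul_inv_cancel₀ hDne])
      (fun x => by simp [hLdef, smul_smul, inv_mul_cancel₀ hDne, mul_inv_cancel₀ hDne]) with heL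
    have hstrictE : HasStrictFDerivAt Tm (eL : (ℝ × ℝ) →L[ℝ] (ℝ × ℝ)) q := hstrict
    set Φ := HasStrictFDerivAt.toOpenPartialHomeomorph Tm hstrictE with hΦ
    have hqs : q ∈ Φ.source := hstrictE.mem_toOpenPartialHomeomorph_source
    obtain ⟨ε, hε, hball⟩ := Metric.isOpen_iff.1 Φ.open_source q hqs
    refine ⟨ε, hε, fun p hp h1 h2 => ?_⟩
    have hps : p ∈ Φ.source := hball (Metric.mem_ball.2 hp)
    have hTq1 : T1 q.1 q.2 = 0 := by simp only [hT1]; rw [hx0, hy0]; ring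
    have hTq2 : T2 q.1 q.2 = 0 := by simp only [hT2]; rw [hx0, hy0]; ring
    apply Φ.injOn hps hqs
    show Tm p = Tm q
    rw [hTm]
    simp only [h1, h2, hTq1, hTq2]
  · rw [hpxT1, hpyT1, hpxT2, hpyT2, ha, hb, hc, hsymq]; ring
  · rw [hpxT1, hpyT1, hpxT2, hpyT2, hsymq]
    have : H22 q * H11 q * (H11 q * H22 q - H12 q * H12 q) -
        H12 q * H12 q * (H11 q * H22 q - H12 q * H12 q) =
        (H11 q * H22 q - H12 q * H12 q) ^ 2 := by ring
    nlinarith [sq_nonneg (H11 q * H22 q - H12 q * H12 q), pow_two_pos_of_ne_zero hD]
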